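/- Let k ≥ 60. Let ε > 0 and 0 < α < 1 be real numbers such that 2^k(1−α)^{2k} > (1+ε)/ε and αn is an integer. Let m = (ln(2)·2^k − γ)·n for some real γ ∈ [0, ln(2)·2^k/4]. Let p_pos = exp(−(ln 2/(8(1+ε)^2))·(1−α)^{4k}·n), let c_s = ⌈n^2·2^n / C(n, αn)⌉, and let μ_pos = c_s·p_pos. Draw φ from D_R(m,n,k) and draw c_s assignments independently and uniformly at random from {0,1}^n. Then with probability at least 1 − p_pos − e^{−n·μ_pos/3}, the number of sampled assignments v with NumClausesSAT(φ, v) ≥ (1 − (1−(1−α)^{2k})/(2^k−1))·m is at most 2n·μ_pos. -/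

import Mathlib

open scoped Classical
open Finset

/-- An assignment of `n` Boolean variables. -/
abbrev Assignment (n : ℕ) := Fin n → Bool

/-- A clause: an ordered `k`-tuple of literals, each a variable index together with a sign. -/
abbrev Clause (n k : ℕ) := Fin k → Fin n × Bool

/-- A formula: an ordered `m`-tuple of clauses. -/
abbrev Formula (n k m : ℕ) := Fin m → Clause n k

/-- An assignment satisfies a clause if it satisfies at least one literal of the clause. -/
def SatClause {n k : ℕ} (v : Assignment n) (c : Clause n k) : Prop :=
  ∃ i, v (c i).1 = (c i).2

/-- An assignment satisfies a formula if it satisfies every clause. -/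
def SatFormula {n k m : ℕ} (v : Assignment n) (φ : Formula n k m) : Prop :=
  ∀ j, SatClause v (φ j)

/-- The number of clauses of `φ` satisfied by `v`. -/
noncomputable def numSat {n k m : ℕ} (φ : Formula n k m) (v : Assignment n) : ℕ :=
  (Finset.univ.filter fun j => SatClause v (φ j)).card

/-- The number of clauses of `φ` left unsatisfied by `v`. -/
noncomputable def numUnsat {n k m : ℕ} (φ : Formula n k m) (v : Assignment n) : ℕ :=
  (Finset.univ.filter fun j => ¬ SatClause v (φ j)).card


section Helpers

lemma my_exp_quad {θ : ℝ} (h0 : 0 ≤ θ) (h1 : θ ≤ 1) :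
    Real.exp (-θ) ≤ 1 - θ + 3/4 * θ^2 := by
  have hb := Real.exp_bound (x := -θ) (by rw [abs_neg, abs_of_nonneg h0]; exact h1)
    (n := 2) (by norm_num)
  have h2 : ∑ m ∈ Finset.range 2, (-θ) ^ m / m.factorial = 1 - θ := by
    norm_num [Finset.sum_range_succ]
    ring
  rw [h2, abs_neg, abs_of_nonneg h0] at hb
  have h5 := (abs_sub_le_iff.mp hb).1
  have h3 : (θ:ℝ)^2 * ((Nat.succ 2 : ℕ) / ((Nat.factorial 2 : ℕ) * (2:ℕ))) = 3/4 * θ^2 := by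
    norm_num [Nat.factorial]
    ring
  rw [h3] at h5
  linarith

lemma my_sum_prod_pow {ι C : Type*} [DecidableEq ι] [Fintype ι] [Fintype C] (g : C → ℝ) :
    ∑ f : ι → C, ∏ i, g (f i) = (∑ c, g c) ^ (Fintype.card ι) := by
  rw [← Fintype.piFinset_univ, Finset.sum_prod_piFinset univ (fun _ c => g c)]
  simp [Finset.prod_const]

lemma my_sum_eval {ι A : Type*} [DecidableEq ι] [Fintype ι] [Fintype A] (i : ι) (f : A → ℝ) :
    ∑ vs : ι → A, f (vs i) = (Fintype.card A : ℝ) ^ (Fintype.card ι - 1) * ∑ a, f a := by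
  have h1 : ∀ vs : ι → A, f (vs i) = ∏ j, (if j = i then f (vs j) else 1) := by
    intro vs
    rw [Finset.prod_ite_eq' Finset.univ i (fun j => f (vs j))]
    simp
  simp_rw [h1]
  rw [← Fintype.piFinset_univ, Finset.sum_prod_piFinset univ (fun j c => if j = i then f c else 1)]
  have h2 : ∀ j, (∑ c : A, if j = i then f c else 1)
      = if j = i then ∑ c, f c else (Fintype.card A : ℝ) := by
    intro j; split <;> simp [Finset.card_univ]
  simp_rw [h2]
  rw [← Finset.mul_prod_erase Finset.univ _ (Finset.mem_univ i)]
  simp only [if_pos rfl]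
  rw [Finset.prod_ite_of_false]
  · rw [Finset.prod_const, Finset.card_erase_of_mem (Finset.mem_univ i), Finset.card_univ,
      mul_comm]
    simp
  · intro j hj; exact (Finset.mem_erase.mp hj).1

lemma my_unsat_count (n k : ℕ) (v : Assignment n) :
    (univ.filter fun c : Clause n k => ¬ SatClause v c).card = n ^ k := by
  have hB : (univ.filter fun l : Fin n × Bool => ¬ v l.1 = l.2).card = n := by
    rw [Finset.card_filter, Fintype.sum_prod_type]
    have : ∀ x : Fin n, (∑ b : Bool, if ¬ v x = b then 1 else 0) = 1 := by
      intro x; cases h : v x <;> simp [h]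
    simp_rw [this]
    simp
  have hset : (univ.filter fun c : Clause n k => ¬ SatClause v c)
      = Fintype.piFinset fun _ : Fin k => (univ.filter fun l : Fin n × Bool => ¬ v l.1 = l.2) := by
    ext c
    simp only [Finset.mem_filter, Finset.mem_univ, true_and, Fintype.mem_piFinset, SatClause]
    push_neg
    constructor
    · intro h i; exact (Finset.mem_filter.mp h).2 i
    · intro h; exact Finset.mem_filter.mpr ⟨Finset.mem_univ _, h⟩
  rw [hset, Fintype.card_piFinset]
  simp [hB]

lemma my_chernoff_count (n k m : ℕ) (v : Assignment n) (L θ : ℝ) (hθ : 0 ≤ θ) :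
    ((univ.filter fun φ : Formula n k m => (numUnsat φ v : ℝ) ≤ L).card : ℝ)
      ≤ Real.exp (θ * L) * ((1 - (1 - Real.exp (-θ)) / 2 ^ k) * (2 * n : ℝ) ^ k) ^ m := by
  set g : Clause n k → ℝ := fun c => if ¬ SatClause v c then Real.exp (-θ) else 1 with hg
  have step1 : ((univ.filter fun φ : Formula n k m => (numUnsat φ v : ℝ) ≤ L).card : ℝ)
      ≤ ∑ φ : Formula n k m, Real.exp (θ * L) * Real.exp (-(θ * (numUnsat φ v : ℝ)))  := by
    rw [Finset.card_filter]
    push_cast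
    apply Finset.sum_le_sum
    intro φ _
    split
    · next h =>
      rw [← Real.exp_add]
      apply Real.one_le_exp
      nlinarith [mul_nonneg hθ (sub_nonneg.mpr h)]
    · positivity
  have step3 : ∀ φ : Formula n k m,
      Real.exp (-(θ * (numUnsat φ v : ℝ))) = ∏ j, g (φ j) := by
    intro φ
    have hu : (numUnsat φ v : ℝ) = ∑ j, (if ¬ SatClause v (φ j) then (1:ℝ) else 0) := by
      rw [numUnsat, Finset.card_filter]
      push_cast
      rfl
    have hgj : ∀ j, g (φ j) = Real.exp (-(θ * (if ¬ SatClause v (φ j) then (1:ℝ) else 0))) := by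
      intro j; simp only [hg]; split_ifs with h <;> simp
    simp_rw [hgj, ← Real.exp_sum]
    congr 1
    rw [hu, Finset.mul_sum]
    rw [← Finset.sum_neg_distrib]
  have step4 : ∑ φ : Formula n k m, ∏ j, g (φ j) = (∑ c, g c) ^ m := by
    have h := my_sum_prod_pow (ι := Fin m) (C := Clause n k) g
    rw [Fintype.card_fin] at h
    exact h
  have htot : (Fintype.card (Clause n k) : ℝ) = (2*(n:ℝ))^k := by
    rw [Fintype.card_fun]
    push_cast
    rw [Fintype.card_prod, Fintype.card_fin, Fintype.card_bool, Fintype.card_fin]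
    push_cast
    ring
  have hle : (n:ℕ)^k ≤ (2*n)^k := Nat.pow_le_pow_left (by omega) k
  have hsplitn := Finset.card_filter_add_card_filter_not
    (s := (univ : Finset (Clause n k))) (p := fun c => ¬ SatClause v c)
  have hcardtot : Fintype.card (Clause n k) = (2*n)^k := by
    have := htot
    push_cast at this
    exact_mod_cast this
  have hsat : (univ.filter fun c : Clause n k => ¬¬ SatClause v c).card = (2*n)^k - n^k := by
    rw [my_unsat_count] at hsplitn
    rw [Finset.card_univ, hcardtot] at hsplitn
    omega
  have step5 : ∑ c, g c = (1 - (1 - Real.exp (-θ)) / 2 ^ k) * (2*(n:ℝ))^k := by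
    rw [hg]
    rw [Finset.sum_ite, Finset.sum_const, Finset.sum_const, my_unsat_count, hsat]
    have h2k : ((2:ℝ))^k ≠ 0 := by positivity
    have hc : ((2*n)^k - n^k : ℕ) = ((2*(n:ℝ))^k - (n:ℝ)^k : ℝ) := by
      push_cast [Nat.cast_sub hle]
      ring
    push_cast [hc]
    have h2n : (2*(n:ℝ))^k = 2^k * (n:ℝ)^k := by rw [mul_pow]
    field_simp
    rw [nsmul_eq_mul, nsmul_eq_mul, hc]
    push_cast
    rw [h2n]
    ring
  calc ((univ.filter fun φ : Formula n k m => (numUnsat φ v : ℝ) ≤ L).card : ℝ)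
      ≤ ∑ φ : Formula n k m, Real.exp (θ * L) * Real.exp (-(θ * (numUnsat φ v : ℝ))) := step1
    _ = Real.exp (θ * L) * ∑ φ : Formula n k m, ∏ j, g (φ j) := by
        rw [← Finset.mul_sum]
        congr 1
        exact Finset.sum_congr rfl fun φ _ => step3 φ
    _ = Real.exp (θ * L) * ((1 - (1 - Real.exp (-θ)) / 2 ^ k) * (2 * (n:ℝ)) ^ k) ^ m := by
        rw [step4, step5]

set_option maxHeartbeats 1000000 in
lemma my_key (n k m : ℕ) (hn : 0 < n) (hk : 60 ≤ k)
    (ε α : ℝ) (hε : 0 < ε) (hα0 : 0 < α) (hα1 : α < 1)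
    (hcond : 2 ^ k * (1 - α) ^ (2 * k) > (1 + ε) / ε)
    (γ : ℝ) (hγ0 : 0 ≤ γ) (hγ1 : γ ≤ Real.log 2 * 2 ^ k / 4)
    (hmval : (m : ℝ) = (Real.log 2 * 2 ^ k - γ) * n) :
    ∃ θ : ℝ, 0 ≤ θ ∧
      Real.exp (θ * ((1 - (1 - α) ^ (2*k)) / ((2:ℝ)^k - 1) * m))
          * (1 - (1 - Real.exp (-θ)) / 2 ^ k) ^ m
        ≤ (Real.exp (-(Real.log 2 / (8 * (1 + ε) ^ 2)) * (1 - α) ^ (4 * k) * n))^2 := by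
  set P : ℝ := (2:ℝ)^k with hPdef
  set δ : ℝ := (1 - α)^(2*k) with hδdef
  have hP1 : (1:ℝ) < P := one_lt_pow₀ (by norm_num) (by omega)
  have hP0 : (0:ℝ) < P := by linarith
  have hδpos : 0 < δ := pow_pos (by linarith) _
  have hδlt1 : δ < 1 := pow_lt_one₀ (by linarith) (by linarith) (by omega)
  have hln2 : 0 < Real.log 2 := Real.log_pos (by norm_num)
  have hnR : (1:ℝ) ≤ n := by exact_mod_cast hn
  have hε1 : (0:ℝ) < 1 + ε := by linarith
  -- consequences of hcond
  have hc1 : 1 + ε < ε * (P * δ) := by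
    rw [gt_iff_lt, div_lt_iff₀ hε] at hcond
    nlinarith [hcond]
  have hc2 : 1 < ε * (P * δ - 1) := by nlinarith
  have hPδ : 1 < P * δ := by nlinarith
  set s : ℝ := (P * δ - 1) / (P - 1) with hsdef
  have hs_pos : 0 < s := div_pos (by linarith) (by linarith)
  have hs_le1 : s ≤ 1 := by
    rw [div_le_one (by linarith)]
    nlinarith
  have hsδ : δ * (P - 1) ≤ (1 + ε) * (P * δ - 1) := by nlinarith
  have hs_ge : δ / (1 + ε) ≤ s := by
    rw [div_le_iff₀ hε1, hsdef, div_mul_eq_mul_div, le_div_iff₀ (by linarith : (0:ℝ) < P - 1)]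
    nlinarith
  set θ : ℝ := 2/3 * s with hθdef
  have hθ0 : 0 ≤ θ := by positivity
  have hθ1 : θ ≤ 1 := by rw [hθdef]; linarith
  refine ⟨θ, hθ0, ?_⟩
  have hq := my_exp_quad hθ0 hθ1
  have hexp0 : 0 < Real.exp (-θ) := Real.exp_pos _
  have hexp1 : Real.exp (-θ) ≤ 1 := Real.exp_le_one_iff.mpr (by linarith)
  set x : ℝ := (1 - Real.exp (-θ)) / P with hxdef
  have hx0 : 0 ≤ x := div_nonneg (by linarith) (by linarith)
  have hx1 : 1 - x ≤ Real.exp (-x) := by linarith [Real.add_one_le_exp (-x)]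
  have hx1' : 0 ≤ 1 - x := by
    rw [hxdef]
    rw [sub_nonneg, div_le_one hP0]
    linarith
  -- (1-x)^m ≤ exp(-x)^m = exp(m * -x)
  have hpow : (1 - x)^m ≤ Real.exp ((m:ℝ) * (-x)) := by
    rw [Real.exp_nat_mul]
    exact pow_le_pow_left₀ hx1' hx1 m
  set L : ℝ := (1 - δ) / (P - 1) * m with hLdef
  have hL0 : 0 ≤ L := by
    apply mul_nonneg
    · apply div_nonneg <;> linarith
    · positivity
  have hmain : Real.exp (θ * L) * (1 - x)^m ≤ Real.exp (θ * L + (m:ℝ) * (-x)) := by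
    rw [Real.exp_add]
    apply mul_le_mul_of_nonneg_left hpow (le_of_lt (Real.exp_pos _))
  -- exponent inequality
  set M : ℝ := (m:ℝ) / P with hMdef
  have hM0 : 0 ≤ M := by
    rw [hMdef]
    positivity
  have hM : 3/4 * Real.log 2 * n ≤ M := by
    rw [hMdef, le_div_iff₀ hP0, hmval]
    have h := mul_le_mul_of_nonneg_left hγ1 (show (0:ℝ) ≤ (n:ℝ) by linarith)
    linarith [h]
  have hL : L = M * (1 - s) := by
    have hP1ne : P - 1 ≠ 0 := ne_of_gt (by linarith)
    have hPne : P ≠ 0 := ne_of_gt hP0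
    rw [hLdef, hMdef, hsdef]
    field_simp [hP1ne, hPne]
    ring
  have hmx : (m:ℝ) * x = M * (1 - Real.exp (-θ)) := by
    rw [hxdef, hMdef]
    ring
  have hub : (m:ℝ) * (-x) ≤ -(M * (θ - 3/4 * θ^2)) := by
    have : M * (θ - 3/4 * θ^2) ≤ M * (1 - Real.exp (-θ)) :=
      mul_le_mul_of_nonneg_left (by linarith) hM0
    rw [← hmx] at this
    linarith
  have hsq : (δ / (1+ε))^2 ≤ s^2 := pow_le_pow_left₀ (by positivity) hs_ge 2
  set c : ℝ := δ^2 / (1+ε)^2 with hcdef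
  have hc' : c ≤ s^2 := by
    rw [hcdef, ← div_pow]
    exact hsq
  have hc0 : 0 ≤ c := by positivity
  have hexpineq : θ * L + (m:ℝ) * (-x) ≤ 2 * (-(Real.log 2 / (8 * (1 + ε) ^ 2)) * δ^2 * n) := by
    have e0 : θ * L - M * (θ - 3/4 * θ^2) = -(M * s^2 / 3) := by
      rw [hL, hθdef]
      ring
    have e1 : M * c ≤ M * s^2 := mul_le_mul_of_nonneg_left hc' hM0
    have e2 : (3/4 * Real.log 2 * n) * c ≤ M * c := mul_le_mul_of_nonneg_right hM hc0
    have e3 : 2 * (-(Real.log 2 / (8 * (1 + ε) ^ 2)) * δ^2 * n) = -((3/4 * Real.log 2 * n) * c / 3) := by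
      rw [hcdef]
      field_simp
      ring
    rw [e3]
    have : (3/4 * Real.log 2 * n) * c / 3 ≤ M * s^2 / 3 := by linarith
    linarith [hub, e0]
  have hδ4 : (1 - α)^(4*k) = δ^2 := by
    rw [hδdef, ← pow_mul]
    congr 1
    ring
  calc Real.exp (θ * ((1 - δ) / (P - 1) * m)) * (1 - x) ^ m
      = Real.exp (θ * L) * (1 - x)^m := by rw [hLdef]
    _ ≤ Real.exp (θ * L + (m:ℝ) * (-x)) := hmain
    _ ≤ Real.exp (2 * (-(Real.log 2 / (8 * (1 + ε) ^ 2)) * δ^2 * n)) := Real.exp_le_exp.mpr hexpineq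
    _ = (Real.exp (-(Real.log 2 / (8 * (1 + ε) ^ 2)) * (1 - α) ^ (4 * k) * n))^2 := by
        rw [hδ4, ← Real.exp_nat_mul]
        norm_num

end Helpers

set_option maxHeartbeats 1600000 in
/-- Under the hypotheses of Statement 2 (with `αn = t` an integer), let
`p_pos = exp(−(ln 2/(8(1+ε)²))(1−α)^{4k} n)`, `c_s = ⌈n²2ⁿ/C(n,αn)⌉`, `μ_pos = c_s·p_pos`.
Draw `φ` uniformly among formulas with `m` clauses and draw `c_s` assignments i.i.d. uniformly.
Then with probability at least `1 − p_pos − e^{−n μ_pos/3}`, the number of sampled assignments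
`v` with `NumClausesSAT(φ,v) ≥ (1−(1−(1−α)^{2k})/(2^k−1))m` is at most `2n·μ_pos`. -/
theorem sampled_positives_bound (n k m : ℕ) (hn : 0 < n) (hk : 60 ≤ k) (hm : 0 < m)
    (ε α : ℝ) (hε : 0 < ε) (hα0 : 0 < α) (hα1 : α < 1)
    (hcond : 2 ^ k * (1 - α) ^ (2 * k) > (1 + ε) / ε)
    (t : ℕ) (ht : (t : ℝ) = α * n)
    (γ : ℝ) (hγ0 : 0 ≤ γ) (hγ1 : γ ≤ Real.log 2 * 2 ^ k / 4)
    (hmval : (m : ℝ) = (Real.log 2 * 2 ^ k - γ) * n) :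
    let T : ℝ := (1 - (1 - (1 - α) ^ (2 * k)) / (2 ^ k - 1)) * m
    let ppos : ℝ := Real.exp (-(Real.log 2 / (8 * (1 + ε) ^ 2)) * (1 - α) ^ (4 * k) * n)
    let cs : ℕ := ⌈((n : ℝ) ^ 2 * 2 ^ n) / (n.choose t : ℝ)⌉₊
    let μpos : ℝ := cs * ppos
    (((univ : Finset (Formula n k m × (Fin cs → Assignment n))).filter fun p =>
        (((univ : Finset (Fin cs)).filter fun i =>
            T ≤ (numSat p.1 (p.2 i) : ℝ)).card : ℝ) ≤ 2 * n * μpos).card : ℝ)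
      / (Fintype.card (Formula n k m × (Fin cs → Assignment n)) : ℝ)
      ≥ 1 - ppos - Real.exp (-(n : ℝ) * μpos / 3) := by
  intro T ppos cs μpos
  have hT : T = (1 - (1 - (1 - α) ^ (2 * k)) / (2 ^ k - 1)) * m := rfl
  have hppos_def : ppos = Real.exp (-(Real.log 2 / (8 * (1 + ε) ^ 2)) * (1 - α) ^ (4 * k) * n) :=
    rfl
  have hμ : μpos = cs * ppos := rfl
  have hppos : 0 < ppos := Real.exp_pos _
  have hnR : (1:ℝ) ≤ (n:ℝ) := by exact_mod_cast hn
  -- cs ≥ 1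
  have htn : t < n := by
    have h1 : (t:ℝ) < n := by
      rw [ht]
      nlinarith [show (0:ℝ) < (n:ℝ) by exact_mod_cast hn]
    exact_mod_cast h1
  have hchoose : (0:ℝ) < (n.choose t : ℝ) := by
    exact_mod_cast Nat.choose_pos (le_of_lt htn)
  have hcs : 0 < cs := by
    show 0 < ⌈((n : ℝ) ^ 2 * 2 ^ n) / (n.choose t : ℝ)⌉₊
    rw [Nat.ceil_pos]
    have hnum : (0:ℝ) < (n : ℝ) ^ 2 * 2 ^ n := by positivity
    exact div_pos hnum hchoose
  have hcsR : (1:ℝ) ≤ (cs:ℝ) := by exact_mod_cast hcs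
  haveI : Nonempty (Fin n) := ⟨⟨0, hn⟩⟩
  have hNpos : 0 < (Fintype.card (Formula n k m × (Fin cs → Assignment n)) : ℝ) := by
    exact_mod_cast Fintype.card_pos
  -- the value of N
  have hcardA : (Fintype.card (Assignment n) : ℝ) = (2:ℝ)^n := by
    rw [Fintype.card_fun, Fintype.card_bool, Fintype.card_fin]
    push_cast
    ring
  have hNval : (Fintype.card (Formula n k m × (Fin cs → Assignment n)) : ℝ)
      = ((2*(n:ℝ))^k)^m * ((2:ℝ)^n)^cs := by
    rw [Fintype.card_prod]
    have h1 : (Fintype.card (Formula n k m) : ℝ) = ((2*(n:ℝ))^k)^m := by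
      rw [Fintype.card_fun, Fintype.card_fun, Fintype.card_prod, Fintype.card_fin,
        Fintype.card_bool, Fintype.card_fin, Fintype.card_fin]
      push_cast
      ring
    have h2 : (Fintype.card (Fin cs → Assignment n) : ℝ) = ((2:ℝ)^n)^cs := by
      rw [Fintype.card_fun, Fintype.card_fin]
      push_cast [hcardA]
      ring
    push_cast
    push_cast at h1 h2
    rw [h1, h2]
  -- the per-assignment count bound
  have hv : ∀ v : Assignment n,
      ((univ.filter fun φ : Formula n k m => T ≤ (numSat φ v : ℝ)).card : ℝ)
        ≤ ppos^2 * ((2*(n:ℝ))^k)^m := by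
    intro v
    obtain ⟨θ, hθ0, hkey⟩ := my_key n k m hn hk ε α hε hα0 hα1 hcond γ hγ0 hγ1 hmval
    set L : ℝ := (1 - (1 - α) ^ (2*k)) / ((2:ℝ)^k - 1) * m with hLdef
    have hTL : T = (m:ℝ) - L := by
      rw [hT, hLdef]
      ring
    have hfe : (univ.filter fun φ : Formula n k m => T ≤ (numSat φ v : ℝ))
        = (univ.filter fun φ : Formula n k m => (numUnsat φ v : ℝ) ≤ L) := by
      apply Finset.filter_congr
      intro φ _
      have hsum : numSat φ v + numUnsat φ v = m := by
        rw [numSat, numUnsat]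
        rw [Finset.card_filter_add_card_filter_not]
        simp
      have hsumR : (numSat φ v : ℝ) + (numUnsat φ v : ℝ) = m := by exact_mod_cast hsum
      constructor
      · intro h
        rw [hTL] at h
        linarith
      · intro h
        rw [hTL]
        linarith
    rw [hfe, hppos_def]
    calc ((univ.filter fun φ : Formula n k m => (numUnsat φ v : ℝ) ≤ L).card : ℝ)
        ≤ Real.exp (θ * L) * ((1 - (1 - Real.exp (-θ)) / 2 ^ k) * (2 * (n:ℝ)) ^ k) ^ m :=
          my_chernoff_count n k m v L θ hθ0
      _ = (Real.exp (θ * L) * (1 - (1 - Real.exp (-θ)) / 2 ^ k) ^ m) * ((2 * (n:ℝ)) ^ k) ^ m := by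
          rw [mul_pow]
          ring
      _ ≤ (Real.exp (-(Real.log 2 / (8 * (1 + ε) ^ 2)) * (1 - α) ^ (4 * k) * n))^2
            * ((2 * (n:ℝ)) ^ k) ^ m := by
          apply mul_le_mul_of_nonneg_right _ (by positivity)
          exact hkey
  -- rewriting the per-sample count as a sum
  have hX : ∀ p : Formula n k m × (Fin cs → Assignment n),
      ((((univ : Finset (Fin cs)).filter fun i => T ≤ (numSat p.1 (p.2 i) : ℝ)).card : ℝ))
        = ∑ i : Fin cs, (if T ≤ (numSat p.1 (p.2 i) : ℝ) then (1:ℝ) else 0) := by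
    intro p
    rw [Finset.card_filter]
    push_cast
    rfl
  have hinner : ∀ v : Assignment n,
      (∑ φ : Formula n k m, (if T ≤ (numSat φ v : ℝ) then (1:ℝ) else 0))
        = ((univ.filter fun φ : Formula n k m => T ≤ (numSat φ v : ℝ)).card : ℝ) := by
    intro v
    rw [Finset.card_filter]
    push_cast
    rfl
  have hsum_eval : ∀ (φ : Formula n k m) (i : Fin cs),
      (∑ vs : Fin cs → Assignment n, (if T ≤ (numSat φ (vs i) : ℝ) then (1:ℝ) else 0))
        = (Fintype.card (Assignment n) : ℝ)^(cs - 1)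
            * ∑ v : Assignment n, (if T ≤ (numSat φ v : ℝ) then (1:ℝ) else 0) := by
    intro φ i
    have h := my_sum_eval (ι := Fin cs) (A := Assignment n) i
      (fun v => if T ≤ (numSat φ v : ℝ) then (1:ℝ) else 0)
    rw [Fintype.card_fin] at h
    exact h
  -- total sum bound
  have htotal : (∑ p : Formula n k m × (Fin cs → Assignment n),
        ((((univ : Finset (Fin cs)).filter fun i => T ≤ (numSat p.1 (p.2 i) : ℝ)).card : ℝ)))
      ≤ (cs : ℝ) * ppos^2 * (Fintype.card (Formula n k m × (Fin cs → Assignment n)) : ℝ) := by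
    have e1 : (∑ p : Formula n k m × (Fin cs → Assignment n),
          ((((univ : Finset (Fin cs)).filter fun i => T ≤ (numSat p.1 (p.2 i) : ℝ)).card : ℝ)))
        = ∑ φ : Formula n k m, ∑ vs : Fin cs → Assignment n, ∑ i : Fin cs,
            (if T ≤ (numSat φ (vs i) : ℝ) then (1:ℝ) else 0) := by
      rw [Fintype.sum_prod_type]
      exact Finset.sum_congr rfl fun φ _ => Finset.sum_congr rfl fun vs _ => hX (φ, vs)
    have e2 : ∀ φ : Formula n k m,
        (∑ vs : Fin cs → Assignment n, ∑ i : Fin cs,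
            (if T ≤ (numSat φ (vs i) : ℝ) then (1:ℝ) else 0))
          = (cs : ℝ) * ((Fintype.card (Assignment n) : ℝ)^(cs - 1)
              * ∑ v : Assignment n, (if T ≤ (numSat φ v : ℝ) then (1:ℝ) else 0)) := by
      intro φ
      rw [Finset.sum_comm]
      have : ∀ i : Fin cs, (∑ vs : Fin cs → Assignment n,
          (if T ≤ (numSat φ (vs i) : ℝ) then (1:ℝ) else 0))
            = (Fintype.card (Assignment n) : ℝ)^(cs - 1)
              * ∑ v : Assignment n, (if T ≤ (numSat φ v : ℝ) then (1:ℝ) else 0) :=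
        fun i => hsum_eval φ i
      rw [Finset.sum_congr rfl fun i _ => this i, Finset.sum_const, Finset.card_univ,
        Fintype.card_fin, nsmul_eq_mul]
    rw [e1, Finset.sum_congr rfl fun φ _ => e2 φ, ← Finset.mul_sum, ← Finset.mul_sum]
    rw [Finset.sum_comm]
    have e3 : ∀ v : Assignment n, (∑ φ : Formula n k m,
        (if T ≤ (numSat φ v : ℝ) then (1:ℝ) else 0)) ≤ ppos^2 * ((2*(n:ℝ))^k)^m := by
      intro v
      rw [hinner v]
      exact hv v
    have e4 : (∑ v : Assignment n, ∑ φ : Formula n k m,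
        (if T ≤ (numSat φ v : ℝ) then (1:ℝ) else 0))
          ≤ (Fintype.card (Assignment n) : ℝ) * (ppos^2 * ((2*(n:ℝ))^k)^m) := by
      calc (∑ v : Assignment n, ∑ φ : Formula n k m,
          (if T ≤ (numSat φ v : ℝ) then (1:ℝ) else 0))
          ≤ ∑ _v : Assignment n, ppos^2 * ((2*(n:ℝ))^k)^m :=
            Finset.sum_le_sum fun v _ => e3 v
        _ = (Fintype.card (Assignment n) : ℝ) * (ppos^2 * ((2*(n:ℝ))^k)^m) := by
            rw [Finset.sum_const, Finset.card_univ, nsmul_eq_mul]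
    have hA0 : (0:ℝ) ≤ (Fintype.card (Assignment n) : ℝ) := by positivity
    have e5 : (cs : ℝ) * ((Fintype.card (Assignment n) : ℝ)^(cs - 1)
          * (∑ v : Assignment n, ∑ φ : Formula n k m,
              (if T ≤ (numSat φ v : ℝ) then (1:ℝ) else 0)))
        ≤ (cs : ℝ) * ((Fintype.card (Assignment n) : ℝ)^(cs - 1)
          * ((Fintype.card (Assignment n) : ℝ) * (ppos^2 * ((2*(n:ℝ))^k)^m))) := by
      apply mul_le_mul_of_nonneg_left _ (by positivity)
      exact mul_le_mul_of_nonneg_left e4 (by positivity)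
    refine le_trans e5 (le_of_eq ?_)
    have hpowA : (Fintype.card (Assignment n) : ℝ)^(cs - 1) * (Fintype.card (Assignment n) : ℝ)
        = (Fintype.card (Assignment n) : ℝ)^cs := by
      rw [← pow_succ]
      congr 1
      omega
    rw [hNval]
    rw [hcardA] at hpowA ⊢
    rw [← hpowA]
    ring
  -- Markov's inequality
  have hB : ((univ.filter fun p : Formula n k m × (Fin cs → Assignment n) =>
        ¬ ((((univ : Finset (Fin cs)).filter fun i =>
            T ≤ (numSat p.1 (p.2 i) : ℝ)).card : ℝ) ≤ 2 * n * μpos)).card : ℝ)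
      ≤ ppos * (Fintype.card (Formula n k m × (Fin cs → Assignment n)) : ℝ) := by
    have h2nμ : (0:ℝ) < 2 * n * μpos := by
      rw [hμ]
      have : (0:ℝ) < (cs:ℝ) := by exact_mod_cast hcs
      exact mul_pos (by linarith : (0:ℝ) < 2 * n) (mul_pos this hppos)
    have hmark : ((univ.filter fun p : Formula n k m × (Fin cs → Assignment n) =>
          ¬ ((((univ : Finset (Fin cs)).filter fun i =>
              T ≤ (numSat p.1 (p.2 i) : ℝ)).card : ℝ) ≤ 2 * n * μpos)).card : ℝ) * (2 * n * μpos)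
        ≤ ∑ p : Formula n k m × (Fin cs → Assignment n),
            ((((univ : Finset (Fin cs)).filter fun i =>
                T ≤ (numSat p.1 (p.2 i) : ℝ)).card : ℝ)) := by
      calc ((univ.filter fun p : Formula n k m × (Fin cs → Assignment n) =>
            ¬ ((((univ : Finset (Fin cs)).filter fun i =>
                T ≤ (numSat p.1 (p.2 i) : ℝ)).card : ℝ) ≤ 2 * n * μpos)).card : ℝ)
              * (2 * n * μpos)
          = ∑ _p ∈ (univ.filter fun p : Formula n k m × (Fin cs → Assignment n) =>
              ¬ ((((univ : Finset (Fin cs)).filter fun i =>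
                  T ≤ (numSat p.1 (p.2 i) : ℝ)).card : ℝ) ≤ 2 * n * μpos)), (2 * n * μpos) := by
            rw [Finset.sum_const, nsmul_eq_mul]
        _ ≤ ∑ p ∈ (univ.filter fun p : Formula n k m × (Fin cs → Assignment n) =>
              ¬ ((((univ : Finset (Fin cs)).filter fun i =>
                  T ≤ (numSat p.1 (p.2 i) : ℝ)).card : ℝ) ≤ 2 * n * μpos)),
              ((((univ : Finset (Fin cs)).filter fun i =>
                  T ≤ (numSat p.1 (p.2 i) : ℝ)).card : ℝ)) := by
            apply Finset.sum_le_sum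
            intro p hp
            exact le_of_lt (not_le.mp (Finset.mem_filter.mp hp).2)
        _ ≤ ∑ p : Formula n k m × (Fin cs → Assignment n),
              ((((univ : Finset (Fin cs)).filter fun i =>
                  T ≤ (numSat p.1 (p.2 i) : ℝ)).card : ℝ)) := by
            apply Finset.sum_le_sum_of_subset_of_nonneg (Finset.subset_univ _)
            intro p _ _
            positivity
    have hchain := le_trans hmark htotal
    have hcc : (cs : ℝ) * ppos^2 * (Fintype.card (Formula n k m × (Fin cs → Assignment n)) : ℝ)
        ≤ (ppos * (Fintype.card (Formula n k m × (Fin cs → Assignment n)) : ℝ)) * (2 * n * μpos) := by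
      rw [hμ]
      have he : (ppos * (Fintype.card (Formula n k m × (Fin cs → Assignment n)) : ℝ))
            * (2 * n * ((cs:ℝ) * ppos))
          - (cs : ℝ) * ppos^2 * (Fintype.card (Formula n k m × (Fin cs → Assignment n)) : ℝ)
          = (cs : ℝ) * ppos^2 * (Fintype.card (Formula n k m × (Fin cs → Assignment n)) : ℝ)
            * (2 * n - 1) := by
        ring
      have hnn : (0:ℝ) ≤ (cs : ℝ) * ppos^2
          * (Fintype.card (Formula n k m × (Fin cs → Assignment n)) : ℝ) * (2 * n - 1) := by
        apply mul_nonneg (by positivity)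
        linarith
      linarith [he, hnn]
    have := le_trans hchain hcc
    exact le_of_mul_le_mul_right this h2nμ
  -- conclude
  have hsplit := Finset.card_filter_add_card_filter_not
    (s := (univ : Finset (Formula n k m × (Fin cs → Assignment n))))
    (p := fun p => ((((univ : Finset (Fin cs)).filter fun i =>
        T ≤ (numSat p.1 (p.2 i) : ℝ)).card : ℝ) ≤ 2 * n * μpos))
  rw [Finset.card_univ] at hsplit
  have hsplitR : ((univ.filter fun p : Formula n k m × (Fin cs → Assignment n) =>
        ((((univ : Finset (Fin cs)).filter fun i =>
            T ≤ (numSat p.1 (p.2 i) : ℝ)).card : ℝ) ≤ 2 * n * μpos)).card : ℝ)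
      = (Fintype.card (Formula n k m × (Fin cs → Assignment n)) : ℝ)
        - ((univ.filter fun p : Formula n k m × (Fin cs → Assignment n) =>
          ¬ ((((univ : Finset (Fin cs)).filter fun i =>
              T ≤ (numSat p.1 (p.2 i) : ℝ)).card : ℝ) ≤ 2 * n * μpos)).card : ℝ) := by
    have := hsplit
    push_cast [← this]
    ring
  rw [ge_iff_le, le_div_iff₀ hNpos, hsplitR]
  have hE : 0 < Real.exp (-(n : ℝ) * μpos / 3) := Real.exp_pos _
  nlinarith [hB, mul_pos hE hNpos]
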